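/- Let $H$ be a self-adjoint operator on a Hilbert space whose lowest spectral point $\lambda_1 = \inf \sigma(H)$ is an isolated eigenvalue, and let $\mu \leq \inf(\sigma(H) \setminus \{\lambda_1\})$. If $\psi$ is a unit vector in the domain of $H$ with $\langle \psi, H\psi\rangle < \mu$, then $\lambda_1 \geq \langle \psi, H\psi\rangle - \frac{\langle H\psi, H\psi\rangle - \langle \psi, H\psi\rangle^2}{\mu - \langle \psi, H\psi\rangle}$. -/

import Mathlib

set_option maxHeartbeats 1000000

open ContinuousLinearMap

section TempleAux

variable {E : Type*} [NormedAddCommGroup E] [InnerProductSpace ℝ E] [CompleteSpace E]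

lemma temple_algebraMap_apply (r : ℝ) (x : E) :
    (algebraMap ℝ (E →L[ℝ] E) r) x = r • x := by
  simp [Algebra.algebraMap_eq_smul_one]

lemma temple_isSelfAdjoint_algebraMap (r : ℝ) :
    IsSelfAdjoint (algebraMap ℝ (E →L[ℝ] E) r) := by
  rw [Algebra.algebraMap_eq_smul_one]
  simp [IsSelfAdjoint, star_smul]

/-- Cauchy–Schwarz for a positive symmetric operator. -/
lemma temple_cs {P : E →L[ℝ] E} (hP : IsSelfAdjoint P)
    (hpos : ∀ v : E, 0 ≤ (inner ℝ (P v) v : ℝ)) (v w : E) :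
    (inner ℝ (P v) w : ℝ) ^ 2 ≤ (inner ℝ (P v) v : ℝ) * (inner ℝ (P w) w : ℝ) := by
  have hsym := hP.isSymmetric
  have hwv : (inner ℝ (P w) v : ℝ) = inner ℝ (P v) w :=
    (hsym w v).trans (real_inner_comm (P v) w)
  have key : ∀ t : ℝ, 0 ≤ (inner ℝ (P w) w : ℝ) * (t * t) + (2 * (inner ℝ (P v) w : ℝ)) * t
      + (inner ℝ (P v) v : ℝ) := by
    intro t
    have h0 := hpos (v + t • w)
    have hexp : (inner ℝ (P (v + t • w)) (v + t • w) : ℝ)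
        = (inner ℝ (P w) w : ℝ) * (t * t) + (2 * (inner ℝ (P v) w : ℝ)) * t
          + (inner ℝ (P v) v : ℝ) := by
      simp only [map_add, map_smul, inner_add_left, inner_add_right,
        real_inner_smul_left, real_inner_smul_right, hwv]
      ring
    linarith [hexp ▸ h0]
  have hd := discrim_le_zero key
  rw [discrim] at hd
  nlinarith [hd]

/-- A self-adjoint operator with nonnegative spectrum has nonnegative numerical range. -/
lemma temple_pos_of_spectrum {T : E →L[ℝ] E} (hT : IsSelfAdjoint T)
    (h : ∀ μ ∈ spectrum ℝ T, 0 ≤ μ) (x : E) : 0 ≤ (inner ℝ (T x) x : ℝ) := by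
  by_contra hneg
  push_neg at hneg
  have hx0 : x ≠ 0 := by rintro rfl; simp at hneg
  set S : Set ℝ := {r | ∃ v : E, ‖v‖ = 1 ∧ r = (inner ℝ (T v) v : ℝ)} with hSdef
  have hbdd : BddBelow S := by
    refine ⟨-‖T‖, ?_⟩
    rintro r ⟨v, hv, rfl⟩
    have h1 : |(inner ℝ (T v) v : ℝ)| ≤ ‖T v‖ * ‖v‖ := abs_real_inner_le_norm _ _
    have h2 : ‖T v‖ ≤ ‖T‖ * ‖v‖ := T.le_opNorm v
    rw [hv] at h1 h2
    simp only [mul_one] at h1 h2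
    cases abs_le.mp h1 with
    | intro hl hr => linarith
  have hxn : (0:ℝ) < ‖x‖ := norm_pos_iff.mpr hx0
  set u : E := ‖x‖⁻¹ • x with hu
  have hu1 : ‖u‖ = 1 := by
    rw [hu, norm_smul, norm_inv, norm_norm, inv_mul_cancel₀ hxn.ne']
  have huS : (inner ℝ (T u) u : ℝ) ∈ S := ⟨u, hu1, rfl⟩
  have hune : (inner ℝ (T u) u : ℝ) < 0 := by
    have heq : (inner ℝ (T u) u : ℝ) = ‖x‖⁻¹ * (‖x‖⁻¹ * inner ℝ (T x) x) := by
      rw [hu]; simp [real_inner_smul_left, real_inner_smul_right]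
    rw [heq]
    have h3 : 0 < ‖x‖⁻¹ := inv_pos.mpr hxn
    exact mul_neg_of_pos_of_neg h3 (mul_neg_of_pos_of_neg h3 hneg)
  have hSne : S.Nonempty := ⟨_, huS⟩
  set μ0 := sInf S with hμ0
  have hμ0neg : μ0 < 0 := lt_of_le_of_lt (csInf_le hbdd huS) hune
  have hmem : μ0 ∈ spectrum ℝ T := by
    by_contra hns
    rw [spectrum.notMem_iff] at hns
    set P : E →L[ℝ] E := T - algebraMap ℝ (E →L[ℝ] E) μ0 with hPdef
    have hPapp : ∀ v : E, P v = T v - μ0 • v := by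
      intro v; rw [hPdef]; simp [temple_algebraMap_apply]
    have hPsa : IsSelfAdjoint P := hT.sub (temple_isSelfAdjoint_algebraMap μ0)
    have hlow : ∀ v : E, μ0 * ‖v‖ ^ 2 ≤ (inner ℝ (T v) v : ℝ) := by
      intro v
      rcases eq_or_ne v 0 with rfl | hv0
      · simp
      · have hvn : (0:ℝ) < ‖v‖ := norm_pos_iff.mpr hv0
        set w : E := ‖v‖⁻¹ • v with hw
        have hw1 : ‖w‖ = 1 := by
          rw [hw, norm_smul, norm_inv, norm_norm, inv_mul_cancel₀ hvn.ne']
        have hwS : (inner ℝ (T w) w : ℝ) ∈ S := ⟨w, hw1, rfl⟩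
        have h1 : μ0 ≤ (inner ℝ (T w) w : ℝ) := csInf_le hbdd hwS
        have h2 : (inner ℝ (T w) w : ℝ) = ‖v‖⁻¹ * (‖v‖⁻¹ * inner ℝ (T v) v) := by
          rw [hw]; simp [real_inner_smul_left, real_inner_smul_right]
        rw [h2] at h1
        have h5 := mul_le_mul_of_nonneg_right h1 (sq_nonneg ‖v‖)
        have h4 : ‖v‖⁻¹ * ‖v‖ = 1 := inv_mul_cancel₀ hvn.ne'
        have h6 : ‖v‖⁻¹ * (‖v‖⁻¹ * (inner ℝ (T v) v : ℝ)) * ‖v‖ ^ 2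
            = inner ℝ (T v) v := by
          linear_combination (‖v‖⁻¹ * ‖v‖ + 1) * (inner ℝ (T v) v : ℝ) * h4
        linarith [h6 ▸ h5]
    have hPpos : ∀ v : E, 0 ≤ (inner ℝ (P v) v : ℝ) := by
      intro v
      rw [hPapp, inner_sub_left, real_inner_smul_left, real_inner_self_eq_norm_sq]
      have := hlow v
      nlinarith
    have hCS : ∀ v : E, ‖P v‖ ^ 2 ≤ ‖P‖ * (inner ℝ (P v) v : ℝ) := by
      intro v
      rcases eq_or_ne (P v) 0 with h0 | h0
      · rw [h0]; simp
      · have h1 := temple_cs hPsa hPpos v (P v)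
        have h2 : (inner ℝ (P (P v)) (P v) : ℝ) ≤ ‖P‖ * ‖P v‖ ^ 2 := by
          have ha : (inner ℝ (P (P v)) (P v) : ℝ) ≤ ‖P (P v)‖ * ‖P v‖ :=
            real_inner_le_norm _ _
          have hb : ‖P (P v)‖ ≤ ‖P‖ * ‖P v‖ := P.le_opNorm _
          nlinarith [norm_nonneg (P v)]
        have h3 : (inner ℝ (P v) (P v) : ℝ) = ‖P v‖ ^ 2 := real_inner_self_eq_norm_sq _
        rw [h3] at h1
        have hPv : (0:ℝ) < ‖P v‖ := norm_pos_iff.mpr h0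
        have h4 := mul_le_mul_of_nonneg_left h2 (hPpos v)
        nlinarith [h1, h4, mul_pos hPv hPv]
    obtain ⟨g, hg⟩ := hns
    set C := ‖((g⁻¹ : (E →L[ℝ] E)ˣ) : E →L[ℝ] E)‖ with hCdef
    have hC0 : 0 ≤ C := norm_nonneg _
    have hginv : ∀ v : E, ‖v‖ ≤ C * ‖P v‖ := by
      intro v
      have h5 : ((g⁻¹ : (E →L[ℝ] E)ˣ) : E →L[ℝ] E) ((g : E →L[ℝ] E) v) = v := by
        rw [← ContinuousLinearMap.mul_apply, Units.inv_mul, ContinuousLinearMap.one_apply]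
      have h6 : (g : E →L[ℝ] E) v = -(P v) := by
        rw [hg]
        simp [ContinuousLinearMap.sub_apply, temple_algebraMap_apply, hPapp]
      calc ‖v‖ = ‖((g⁻¹ : (E →L[ℝ] E)ˣ) : E →L[ℝ] E) ((g : E →L[ℝ] E) v)‖ := by rw [h5]
        _ ≤ C * ‖(g : E →L[ℝ] E) v‖ := le_opNorm _ _
        _ = C * ‖P v‖ := by rw [h6, norm_neg]
    set K := C ^ 2 * ‖P‖ with hKdef
    have hK0 : 0 ≤ K := by positivity
    have hK1 : (0:ℝ) < K + 1 := by linarith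
    set ε := (K + 1)⁻¹ with hεdef
    have hεpos : 0 < ε := inv_pos.mpr hK1
    obtain ⟨r, hrS, hrlt⟩ := Real.lt_sInf_add_pos hSne hεpos
    obtain ⟨v, hv1, rfl⟩ := hrS
    have h7 : (inner ℝ (P v) v : ℝ) < ε := by
      rw [hPapp, inner_sub_left, real_inner_smul_left, real_inner_self_eq_norm_sq, hv1]
      rw [← hμ0] at hrlt
      nlinarith [hrlt]
    have h8 : (1:ℝ) ≤ C * ‖P v‖ := by
      have := hginv v; rw [hv1] at this; exact this
    have h9 := hCS v
    have h10 : K * ε < 1 := by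
      rw [hεdef, ← div_eq_mul_inv]
      exact (div_lt_one hK1).mpr (by linarith)
    have h11 : (1:ℝ) ≤ C ^ 2 * ‖P v‖ ^ 2 := by nlinarith [h8, hC0, norm_nonneg (P v)]
    have h12 : C ^ 2 * ‖P v‖ ^ 2 ≤ C ^ 2 * (‖P‖ * (inner ℝ (P v) v : ℝ)) :=
      mul_le_mul_of_nonneg_left h9 (sq_nonneg C)
    have h13 : C ^ 2 * (‖P‖ * (inner ℝ (P v) v : ℝ)) ≤ K * ε := by
      rw [hKdef, mul_assoc]
      exact mul_le_mul_of_nonneg_left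
        (mul_le_mul_of_nonneg_left h7.le (norm_nonneg P)) (sq_nonneg C)
    linarith
  linarith [h μ0 hmem]

end TempleAux

/-- Temple's inequality for a self-adjoint operator whose lowest spectral point is an
isolated eigenvalue. -/
theorem stmt_3 {E : Type*} [NormedAddCommGroup E] [InnerProductSpace ℝ E] [CompleteSpace E]
    (H : E →L[ℝ] E) (hH : IsSelfAdjoint H)
    (lam1 : ℝ) (hlam1 : lam1 = sInf (spectrum ℝ H))
    (heig : Module.End.HasEigenvalue (H : Module.End ℝ E) lam1)
    (hisol : ∃ ε > 0, ∀ x ∈ spectrum ℝ H, x ≠ lam1 → lam1 + ε ≤ x)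
    (m : ℝ) (hm : ∀ x ∈ spectrum ℝ H, x ≠ lam1 → m ≤ x)
    (ψ : E) (hψ : ‖ψ‖ = 1) (hψm : (inner ℝ ψ (H ψ) : ℝ) < m) :
    lam1 ≥ (inner ℝ ψ (H ψ) : ℝ) -
      ((inner ℝ (H ψ) (H ψ) : ℝ) - (inner ℝ ψ (H ψ) : ℝ) ^ 2) / (m - (inner ℝ ψ (H ψ) : ℝ)) := by
  have hspec : ∀ x ∈ spectrum ℝ H, 0 ≤ (x - lam1) * (x - m) := by
    intro x hx
    rcases eq_or_ne x lam1 with rfl | hne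
    · simp
    · have h1 : lam1 ≤ x := by
        rw [hlam1]
        exact csInf_le (spectrum.isCompact H).bddBelow hx
      have h2 := hm x hx hne
      nlinarith
  set B1 : E →L[ℝ] E := H - algebraMap ℝ (E →L[ℝ] E) lam1 with hB1
  set B2 : E →L[ℝ] E := H - algebraMap ℝ (E →L[ℝ] E) m with hB2
  have hB1sa : IsSelfAdjoint B1 := hH.sub (temple_isSelfAdjoint_algebraMap lam1)
  have hB2sa : IsSelfAdjoint B2 := hH.sub (temple_isSelfAdjoint_algebraMap m)
  have cHm : Commute H (algebraMap ℝ (E →L[ℝ] E) m) := Algebra.commute_algebraMap_right m H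
  have cam : Commute (algebraMap ℝ (E →L[ℝ] E) lam1) (algebraMap ℝ (E →L[ℝ] E) m) :=
    Algebra.commute_algebraMap_left lam1 _
  have caH : Commute (algebraMap ℝ (E →L[ℝ] E) lam1) H := Algebra.commute_algebraMap_left lam1 H
  have hcomm : B1 * B2 = B2 * B1 := by
    have : Commute B1 B2 :=
      Commute.sub_left (Commute.sub_right (Commute.refl H) cHm)
        (Commute.sub_right caH cam)
    exact this
  have hTsa : IsSelfAdjoint (B1 * B2) := by
    rw [IsSelfAdjoint, star_mul, hB1sa.star_eq, hB2sa.star_eq]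
    exact hcomm.symm
  have hσT : ∀ μ ∈ spectrum ℝ (B1 * B2), 0 ≤ μ := by
    intro μ hμ
    by_contra hμn
    push_neg at hμn
    have hU : IsUnit (algebraMap ℝ (E →L[ℝ] E) μ - B1 * B2) := by
      rcases lt_or_ge ((lam1 - m) ^ 2 + 4 * μ) 0 with hd | hd
      · -- no real roots
        set c0 : ℝ := (lam1 + m) / 2 with hc0
        set e0 : ℝ := -((lam1 - m) ^ 2 + 4 * μ) / 4 with he0
        have he0pos : 0 < e0 := by rw [he0]; linarith
        apply isUnit_of_forall_le_norm_inner_map _ (c := ⟨e0, he0pos.le⟩)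
          (by exact_mod_cast he0pos)
        intro z
        have hsym := hB1sa.isSymmetric
        have hinner : (inner ℝ ((algebraMap ℝ (E →L[ℝ] E) μ - B1 * B2) z) z : ℝ)
            = μ * ‖z‖ ^ 2 - (‖H z‖ ^ 2 - (lam1 + m) * (inner ℝ (H z) z : ℝ)
              + lam1 * m * ‖z‖ ^ 2) := by
          rw [ContinuousLinearMap.sub_apply, ContinuousLinearMap.mul_apply, inner_sub_left,
            temple_algebraMap_apply]
          rw [show (inner ℝ (B1 (B2 z)) z : ℝ) = inner ℝ (B2 z) (B1 z) from hsym (B2 z) z]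
          rw [hB1, hB2]
          simp only [ContinuousLinearMap.sub_apply, temple_algebraMap_apply,
            inner_sub_left, inner_sub_right, real_inner_smul_left, real_inner_smul_right]
          rw [real_inner_self_eq_norm_sq, ← real_inner_self_eq_norm_sq (H z),
            real_inner_comm z (H z)]
          ring
        have hns : ‖H z - c0 • z‖ ^ 2
            = ‖H z‖ ^ 2 - 2 * c0 * (inner ℝ (H z) z : ℝ) + c0 ^ 2 * ‖z‖ ^ 2 := by
          rw [norm_sub_sq_real, real_inner_smul_right, norm_smul]
          rw [Real.norm_eq_abs, mul_pow, sq_abs]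
          ring
        have hval : (inner ℝ ((algebraMap ℝ (E →L[ℝ] E) μ - B1 * B2) z) z : ℝ)
            = -(‖H z - c0 • z‖ ^ 2 + e0 * ‖z‖ ^ 2) := by
          rw [hinner, hns, hc0, he0]; ring
        rw [hval, norm_neg, Real.norm_eq_abs,
          abs_of_nonneg (by positivity)]
        have := sq_nonneg ‖H z - c0 • z‖
        change ‖z‖ ^ 2 * e0 ≤ ‖H z - c0 • z‖ ^ 2 + e0 * ‖z‖ ^ 2
        nlinarith
      · -- real roots
        have hd2 : Real.sqrt ((lam1 - m) ^ 2 + 4 * μ) ^ 2 = (lam1 - m) ^ 2 + 4 * μ :=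
          Real.sq_sqrt hd
        obtain ⟨r1, r2, hsum, hprod⟩ :
            ∃ r1 r2 : ℝ, r1 + r2 = lam1 + m ∧ r1 * r2 = lam1 * m - μ :=
          ⟨(lam1 + m + Real.sqrt ((lam1 - m) ^ 2 + 4 * μ)) / 2,
           (lam1 + m - Real.sqrt ((lam1 - m) ^ 2 + 4 * μ)) / 2,
           by ring, by linear_combination (-(1:ℝ)/4) * hd2⟩
        have hr1 : r1 ∉ spectrum ℝ H := by
          intro hmem
          have h0 := hspec r1 hmem
          have he : (r1 - lam1) * (r1 - m) = μ := by
            linear_combination r1 * hsum - hprod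
          linarith [he ▸ h0]
        have hr2 : r2 ∉ spectrum ℝ H := by
          intro hmem
          have h0 := hspec r2 hmem
          have he : (r2 - lam1) * (r2 - m) = μ := by
            linear_combination r2 * hsum - hprod
          linarith [he ▸ h0]
        have hu1 : IsUnit (algebraMap ℝ (E →L[ℝ] E) r1 - H) := spectrum.notMem_iff.mp hr1
        have hu2 : IsUnit (algebraMap ℝ (E →L[ℝ] E) r2 - H) := spectrum.notMem_iff.mp hr2
        have e1 : (Polynomial.C r1 + Polynomial.C r2 : Polynomial ℝ)
            = Polynomial.C lam1 + Polynomial.C m := by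
          rw [← Polynomial.C_add, ← Polynomial.C_add, hsum]
        have e2 : (Polynomial.C r1 * Polynomial.C r2 : Polynomial ℝ)
            = Polynomial.C lam1 * Polynomial.C m - Polynomial.C μ := by
          rw [← Polynomial.C_mul, hprod, Polynomial.C_sub, Polynomial.C_mul]
        have hpq : ((Polynomial.X - Polynomial.C lam1) * (Polynomial.X - Polynomial.C m)
              - Polynomial.C μ : Polynomial ℝ)
            = (Polynomial.X - Polynomial.C r1) * (Polynomial.X - Polynomial.C r2) := by
          linear_combination (Polynomial.X : Polynomial ℝ) * e1 - e2
        have hop := congrArg (Polynomial.aeval (R := ℝ) (A := E →L[ℝ] E) H) hpq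
        simp only [map_mul, map_sub, Polynomial.aeval_X, Polynomial.aeval_C] at hop
        rw [hB1, hB2]
        have hfin : algebraMap ℝ (E →L[ℝ] E) μ
              - (H - algebraMap ℝ (E →L[ℝ] E) lam1) * (H - algebraMap ℝ (E →L[ℝ] E) m)
            = -((H - algebraMap ℝ (E →L[ℝ] E) r1) * (H - algebraMap ℝ (E →L[ℝ] E) r2)) := by
          rw [← hop]; rw [neg_sub]
        rw [hfin]
        have hu1' : IsUnit (H - algebraMap ℝ (E →L[ℝ] E) r1) := by
          have := hu1.neg; rwa [neg_sub] at this
        have hu2' : IsUnit (H - algebraMap ℝ (E →L[ℝ] E) r2) := by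
          have := hu2.neg; rwa [neg_sub] at this
        exact (hu1'.mul hu2').neg
    exact absurd hμ (spectrum.notMem_iff.mpr hU)
  have hpos := temple_pos_of_spectrum hTsa hσT ψ
  have hsym := hB1sa.isSymmetric
  have hexp : (inner ℝ ((B1 * B2) ψ) ψ : ℝ)
      = (inner ℝ (H ψ) (H ψ) : ℝ) - (lam1 + m) * (inner ℝ ψ (H ψ) : ℝ) + lam1 * m := by
    rw [ContinuousLinearMap.mul_apply]
    rw [show (inner ℝ (B1 (B2 ψ)) ψ : ℝ) = inner ℝ (B2 ψ) (B1 ψ) from hsym (B2 ψ) ψ]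
    rw [hB1, hB2]
    simp only [ContinuousLinearMap.sub_apply, temple_algebraMap_apply,
      inner_sub_left, inner_sub_right, real_inner_smul_left, real_inner_smul_right]
    rw [show (inner ℝ ψ ψ : ℝ) = 1 from by rw [real_inner_self_eq_norm_sq, hψ]; norm_num,
      real_inner_comm ψ (H ψ)]
    ring
  rw [hexp] at hpos
  have hme : 0 < m - (inner ℝ ψ (H ψ) : ℝ) := sub_pos.mpr hψm
  rw [ge_iff_le, sub_le_iff_le_add, ← sub_le_iff_le_add', le_div_iff₀ hme]
  nlinarith [hpos]
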